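/- arXiv:2511.21170 — 2 statements merged into one kernel-verified Lean document; each statement's English description precedes it below -/
import Mathlib

section
/- For every graph G with no isolated vertices, there exists a graph H and a secure coalition partition π of H such that the secure coalition graph SCG(H, π) is isomorphic to G. -/
namespace SecCoal

/-- `D` is a dominating set of `G`. -/
def IsDominating {V : Type*} (G : SimpleGraph V) (D : Set V) : Prop :=
  ∀ v ∉ D, ∃ u ∈ D, G.Adj u v

/-- `S` is a secure dominating set of `G`. -/
def IsSecureDominating {V : Type*} (G : SimpleGraph V) (S : Set V) : Prop :=
  IsDominating G S ∧
    ∀ u ∉ S, ∃ v ∈ S, G.Adj v u ∧ IsDominating G ((S \ {v}) ∪ {u})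

/-- Degree of a vertex. -/
noncomputable def deg {V : Type*} (G : SimpleGraph V) (v : V) : ℕ :=
  (G.neighborSet v).ncard

/-- Minimum degree. -/
noncomputable def minDeg {V : Type*} (G : SimpleGraph V) : ℕ :=
  sInf (Set.range (deg G))

/-- Maximum degree. -/
noncomputable def maxDeg {V : Type*} (G : SimpleGraph V) : ℕ :=
  sSup (Set.range (deg G))

/-- `π` is a secure coalition partition of `G`. -/
def IsSecPartition {V : Type*} (G : SimpleGraph V) (π : Finset (Set V)) : Prop :=
  Setoid.IsPartition (↑π : Set (Set V)) ∧
    ∀ A ∈ π,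
      (∃ v, A = {v} ∧ deg G v = Nat.card V - 1 ∧ IsSecureDominating G A) ∨
      (¬ IsSecureDominating G A ∧
        ∃ B ∈ π, B ≠ A ∧ IsSecureDominating G (A ∪ B))

/-- The secure coalition number of `G`. -/
noncomputable def SEC {V : Type*} (G : SimpleGraph V) : ℕ :=
  sSup {k | ∃ π : Finset (Set V), IsSecPartition G π ∧ π.card = k}

/-- Two disjoint sets form a secure coalition. -/
def FormsSecCoalition {V : Type*} (G : SimpleGraph V) (A B : Set V) : Prop :=
  Disjoint A B ∧ ¬ IsSecureDominating G A ∧ ¬ IsSecureDominating G B ∧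
    IsSecureDominating G (A ∪ B)

/-- The domination number of `G`. -/
noncomputable def gammaDom {V : Type*} (G : SimpleGraph V) : ℕ :=
  sInf {k | ∃ D : Set V, IsDominating G D ∧ D.ncard = k}

/-- The secure domination number of `G`. -/
noncomputable def secDomNum {V : Type*} (G : SimpleGraph V) : ℕ :=
  sInf {k | ∃ S : Set V, IsSecureDominating G S ∧ S.ncard = k}

/-- `π` is a coalition partition (w.r.t. domination) of `G`. -/
def IsCoalitionPartition {V : Type*} (G : SimpleGraph V) (π : Finset (Set V)) : Prop :=
  Setoid.IsPartition (↑π : Set (Set V)) ∧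
    ∀ A ∈ π,
      (∃ v, A = {v} ∧ IsDominating G A) ∨
      (¬ IsDominating G A ∧ ∃ B ∈ π, B ≠ A ∧ IsDominating G (A ∪ B))

/-- The coalition number of `G`. -/
noncomputable def CNum {V : Type*} (G : SimpleGraph V) : ℕ :=
  sSup {k | ∃ π : Finset (Set V), IsCoalitionPartition G π ∧ π.card = k}

/-- The secure coalition graph of `G` w.r.t. a partition `π`. -/
def SCG {V : Type*} (G : SimpleGraph V) (π : Finset (Set V)) :
    SimpleGraph {A : Set V // A ∈ π} where
  Adj A B := FormsSecCoalition G A.1 B.1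
  symm := by
    constructor
    rintro A B ⟨hd, h1, h2, h3⟩
    exact ⟨hd.symm, h2, h1, by rwa [Set.union_comm]⟩
  loopless := by
    constructor
    rintro A ⟨hd, h1, h2, h3⟩
    exact h1 (by simpa using h3)

end SecCoal

open SecCoal
set_option linter.unusedSectionVars false

namespace SecCoalAux

open SecCoal

variable {V : Type} [Fintype V] (G : SimpleGraph V)

/-- Clique indices: one clique per vertex (`Q`-cliques) and one per non-edge. -/
def Cl := V ⊕ {s : Sym2 V // s ∉ G.edgeSet}

/-- Validity of a token: a token in clique `inl i` is owned by a vertex `≠ i`,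
a token in clique `inr s` is owned by a vertex not in `s`. -/
def valid : Cl G × V → Prop
  | (Sum.inl i, j) => i ≠ j
  | (Sum.inr s, j) => j ∉ s.1

/-- The vertex set of the constructed graph. -/
def Wt := {p : Cl G × V // valid G p}

instance : Finite (Cl G) := by unfold Cl; infer_instance

instance : Finite (Wt G) := by unfold Wt; infer_instance

noncomputable instance : Fintype (Wt G) := Fintype.ofFinite _

/-- The constructed graph: disjoint union of cliques. -/
def HH : SimpleGraph (Wt G) where
  Adj x y := x.1.1 = y.1.1 ∧ x ≠ y
  symm := by constructor; rintro x y ⟨h1, h2⟩; exact ⟨h1.symm, h2.symm⟩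
  loopless := by constructor; rintro x ⟨h1, h2⟩; exact h2 rfl

/-- The part owned by vertex `m`. -/
def AA (m : V) : Set (Wt G) := {x | x.1.2 = m}

lemma dom_of (S : Set (Wt G)) (h : ∀ x : Wt G, ∃ y ∈ S, y.1.1 = x.1.1) :
    IsDominating (HH G) S := by
  intro v hv
  obtain ⟨y, hyS, hy⟩ := h v
  exact ⟨y, hyS, ⟨hy, fun e => hv (e ▸ hyS)⟩⟩

/-- Secure domination in `HH G` is just meeting every (nonempty) clique. -/
lemma sec_iff (S : Set (Wt G)) :
    IsSecureDominating (HH G) S ↔ ∀ x : Wt G, ∃ y ∈ S, y.1.1 = x.1.1 := by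
  constructor
  · intro h x
    by_cases hx : x ∈ S
    · exact ⟨x, hx, rfl⟩
    · obtain ⟨u, huS, hu⟩ := h.1 x hx
      exact ⟨u, huS, hu.1⟩
  · intro h
    refine ⟨dom_of G S h, ?_⟩
    intro u hu
    obtain ⟨y, hyS, hy⟩ := h u
    have hyu : y ≠ u := fun e => hu (e ▸ hyS)
    refine ⟨y, hyS, ⟨hy, hyu⟩, ?_⟩
    apply dom_of
    intro x
    obtain ⟨z, hzS, hz⟩ := h x
    by_cases hzy : z = y
    · refine ⟨u, Or.inr rfl, ?_⟩
      rw [← hy, ← hzy, hz]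
    · exact ⟨z, Or.inl ⟨hzS, hzy⟩, hz⟩

lemma AA_not_sec (m : V) (hm : ∃ u, G.Adj u m) :
    ¬ IsSecureDominating (HH G) (AA G m) := by
  rw [sec_iff]
  push_neg
  obtain ⟨u, hu⟩ := hm
  have hmu : m ≠ u := (G.ne_of_adj hu).symm
  refine ⟨⟨(Sum.inl m, u), hmu⟩, ?_⟩
  rintro ⟨⟨c, t⟩, hval⟩ hyA hy
  simp only [AA, Set.mem_setOf_eq] at hyA
  subst hyA
  simp only at hy
  rw [hy] at hval
  exact hval rfl

lemma union_sec {i j : V} (hij : G.Adj i j) :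
    IsSecureDominating (HH G) (AA G i ∪ AA G j) := by
  rw [sec_iff]
  rintro ⟨⟨c, t⟩, hval⟩
  rcases c with k | s
  · by_cases hk : k = i
    · refine ⟨⟨(Sum.inl k, j), ?_⟩, Or.inr rfl, rfl⟩
      rw [hk]; exact G.ne_of_adj hij
    · exact ⟨⟨(Sum.inl k, i), hk⟩, Or.inl rfl, rfl⟩
  · have : i ∉ s.1 ∨ j ∉ s.1 := by
      by_contra hc
      push_neg at hc
      have hs : s.1 = s(i, j) := (Sym2.mem_and_mem_iff (G.ne_of_adj hij)).mp ⟨hc.1, hc.2⟩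
      exact s.2 (by rw [hs]; exact hij)
    rcases this with h | h
    · exact ⟨⟨(Sum.inr s, i), h⟩, Or.inl rfl, rfl⟩
    · exact ⟨⟨(Sum.inr s, j), h⟩, Or.inr rfl, rfl⟩

lemma union_not_sec {i j : V} (hij : ¬ G.Adj i j) (hne : i ≠ j) (hnb : ∃ u, G.Adj u i) :
    ¬ IsSecureDominating (HH G) (AA G i ∪ AA G j) := by
  rw [sec_iff]
  push_neg
  obtain ⟨u, hu⟩ := hnb
  have hui : u ≠ i := G.ne_of_adj hu
  have huj : u ≠ j := by
    rintro rfl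
    exact hij (hu.symm)
  have hs : (s(i, j) : Sym2 V) ∉ G.edgeSet := by
    rw [SimpleGraph.mem_edgeSet]; exact hij
  have hunot : u ∉ (s(i, j) : Sym2 V) := by
    rw [Sym2.mem_iff]
    rintro (rfl | rfl) <;> simp_all
  refine ⟨⟨(Sum.inr ⟨s(i, j), hs⟩, u), hunot⟩, ?_⟩
  rintro ⟨⟨c, t⟩, hval⟩ hyA hy
  simp only at hy
  rw [hy] at hval
  have ht : t ∈ (s(i, j) : Sym2 V) := by
    rcases hyA with h | h <;> simp only [AA, Set.mem_setOf_eq] at h <;> (change t = _ at h) <;>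
      rw [h, Sym2.mem_iff] <;> simp
  exact hval ht

lemma AA_mem_self (m u : V) (hu : G.Adj u m) :
    (⟨(Sum.inl u, m), G.ne_of_adj hu⟩ : Wt G) ∈ AA G m := rfl

lemma AA_inj (hiso : ∀ v : V, ∃ u, G.Adj u v) : Function.Injective (AA G) := by
  intro m m' h
  obtain ⟨u, hu⟩ := hiso m
  have hx : (⟨(Sum.inl u, m), G.ne_of_adj hu⟩ : Wt G) ∈ AA G m := rfl
  rw [h] at hx
  exact hx

lemma AA_disj {i j : V} (hne : i ≠ j) : Disjoint (AA G i) (AA G j) := by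
  rw [Set.disjoint_left]
  intro x hxi hxj
  exact hne (hxi.symm.trans hxj)

end SecCoalAux
namespace SecCoalAux

open SecCoal

variable {V : Type} [Fintype V] (G : SimpleGraph V)

open scoped Classical in
/-- The partition: one part per vertex of `G`. -/
noncomputable def pp : Finset (Set (Wt G)) := Finset.univ.image (AA G)

lemma mem_pp {B : Set (Wt G)} : B ∈ pp G ↔ ∃ m, AA G m = B := by
  classical
  simp [pp]

lemma pp_partition (hiso : ∀ v : V, ∃ u, G.Adj u v) :
    Setoid.IsPartition (↑(pp G) : Set (Set (Wt G))) := by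
  constructor
  · intro h
    rw [Finset.mem_coe, mem_pp] at h
    obtain ⟨m, hm⟩ := h
    obtain ⟨u, hu⟩ := hiso m
    have : (⟨(Sum.inl u, m), G.ne_of_adj hu⟩ : Wt G) ∈ AA G m := rfl
    rw [hm] at this
    exact this
  · intro x
    refine ⟨AA G x.1.2, ⟨?_, rfl⟩, ?_⟩
    · rw [Finset.mem_coe, mem_pp]; exact ⟨x.1.2, rfl⟩
    · rintro B ⟨hB, hxB⟩
      rw [Finset.mem_coe, mem_pp] at hB
      obtain ⟨m, rfl⟩ := hB
      have : x.1.2 = m := hxB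
      rw [this]

lemma pp_isSecPartition (hiso : ∀ v : V, ∃ u, G.Adj u v) :
    IsSecPartition (HH G) (pp G) := by
  refine ⟨pp_partition G hiso, ?_⟩
  intro B hB
  rw [mem_pp] at hB
  obtain ⟨m, rfl⟩ := hB
  right
  obtain ⟨u, hu⟩ := hiso m
  refine ⟨AA_not_sec G m ⟨u, hu⟩, AA G u, ?_, ?_, ?_⟩
  · rw [mem_pp]; exact ⟨u, rfl⟩
  · intro h
    exact G.ne_of_adj hu (AA_inj G hiso h)
  · exact union_sec G (hu.symm)

lemma scg_adj (hiso : ∀ v : V, ∃ u, G.Adj u v) (a b : V) :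
    FormsSecCoalition (HH G) (AA G a) (AA G b) ↔ G.Adj a b := by
  constructor
  · rintro ⟨hdisj, hna, hnb, hsec⟩
    by_contra hab
    have hne : a ≠ b := by
      rintro rfl
      obtain ⟨u, hu⟩ := hiso a
      have hx : (⟨(Sum.inl u, a), G.ne_of_adj hu⟩ : Wt G) ∈ AA G a := rfl
      exact (Set.disjoint_left.mp hdisj hx) hx
    exact union_not_sec G hab hne (hiso a) hsec
  · intro hab
    have hne : a ≠ b := G.ne_of_adj hab
    exact ⟨AA_disj G hne, AA_not_sec G a (hiso a), AA_not_sec G b (hiso b),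
      union_sec G hab⟩

/-- The main construction for graphs in `Type 0`. -/
lemma main (hiso : ∀ v : V, ∃ u, G.Adj u v) :
    ∃ (W : Type) (_ : Fintype W) (H : SimpleGraph W) (π : Finset (Set W)),
      IsSecPartition H π ∧ Nonempty (SCG H π ≃g G) := by
  refine ⟨Wt G, inferInstance, HH G, pp G, pp_isSecPartition G hiso, ?_⟩
  have f : V → {B : Set (Wt G) // B ∈ pp G} :=
    fun v => ⟨AA G v, (mem_pp G).mpr ⟨v, rfl⟩⟩
  have hbij : Function.Bijective (fun v => (⟨AA G v, (mem_pp G).mpr ⟨v, rfl⟩⟩ :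
      {B : Set (Wt G) // B ∈ pp G})) := by
    constructor
    · intro a b h
      exact AA_inj G hiso (congrArg Subtype.val h)
    · rintro ⟨B, hB⟩
      obtain ⟨m, rfl⟩ := (mem_pp G).mp hB
      exact ⟨m, rfl⟩
  refine ⟨?_⟩
  have e : G ≃g SCG (HH G) (pp G) :=
    { toEquiv := Equiv.ofBijective _ hbij
      map_rel_iff' := by
        intro a b
        exact scg_adj G hiso a b }
  exact e.symm

end SecCoalAux
theorem stmt17 {V : Type*} [Fintype V] (G : SimpleGraph V)
    (hiso : ∀ v : V, ∃ u, G.Adj u v) :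
    ∃ (W : Type) (_ : Fintype W) (H : SimpleGraph W) (π : Finset (Set W)),
      IsSecPartition H π ∧ Nonempty (SCG H π ≃g G) := by
  classical
  obtain ⟨e⟩ : Nonempty (V ≃ Fin (Fintype.card V)) := ⟨Fintype.equivFin V⟩
  set G' : SimpleGraph (Fin (Fintype.card V)) :=
    { Adj := fun i j => G.Adj (e.symm i) (e.symm j)
      symm := ⟨fun i j h => G.adj_symm h⟩
      loopless := ⟨fun i h => G.irrefl h⟩ } with hG'
  have hiso' : ∀ v, ∃ u, G'.Adj u v := by
    intro v
    obtain ⟨u, hu⟩ := hiso (e.symm v)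
    exact ⟨e u, by simpa [hG'] using hu⟩
  obtain ⟨W, hW, H, π, hπ, ⟨φ⟩⟩ := SecCoalAux.main G' hiso'
  refine ⟨W, hW, H, π, hπ, ⟨?_⟩⟩
  have ψ : G' ≃g G :=
    { toEquiv := e.symm
      map_rel_iff' := by intro a b; rfl }
  exact ψ.comp φ
end

section
/- Let G be a graph of order n ≥ 2 that is not edgeless, having a nonempty set I of isolated vertices, and let G' be the subgraph induced by V(G) \ I. Then SEC(G) ≥ δ(G') + 2. -/
open SecCoal

section Aux
open SecCoal

variable {V : Type*} [Fintype V] [DecidableEq V] (G : SimpleGraph V)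

lemma aux_exists_nbr {d : ℕ} {w : V}
    (hw : d ≤ (G.neighborSet w).ncard) {B : Finset V} (hB : B.card ≤ d)
    (hwB : w ∈ B) : ∃ z ∉ B, G.Adj z w := by
  by_contra h; push_neg at h
  have hsub : G.neighborSet w ⊆ ↑(B.erase w) := by
    intro z hz
    rw [SimpleGraph.mem_neighborSet] at hz
    simp only [Finset.coe_erase, Set.mem_diff, Set.mem_singleton_iff]
    refine ⟨?_, fun e => G.loopless.irrefl w (e ▸ hz)⟩
    by_contra hzB
    exact h z hzB hz.symm
  have h1 : (G.neighborSet w).ncard ≤ (B.erase w).card := by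
    rw [← Set.ncard_coe_finset]
    exact Set.ncard_le_ncard hsub (Set.toFinite _)
  have h2 : (B.erase w).card < B.card := Finset.card_erase_lt_of_mem hwB
  omega

omit [Fintype V] [DecidableEq V] in
lemma aux_dom_compl (B : Finset V)
    (h : ∀ u ∈ B, ∃ z, z ∉ B ∧ G.Adj z u) : IsDominating G (↑B : Set V)ᶜ := by
  intro u hu
  rw [Set.notMem_compl_iff, Finset.mem_coe] at hu
  obtain ⟨z, hz, ha⟩ := h u hu
  exact ⟨z, by simpa using hz, ha⟩

end Aux

theorem stmt19 {V : Type*} [Fintype V] (G : SimpleGraph V)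
    (hn : 2 ≤ Fintype.card V) (hne : G ≠ ⊥)
    (hI : {v : V | ∀ u, ¬ G.Adj u v}.Nonempty) :
    minDeg (G.induce {v : V | ∀ u, ¬ G.Adj u v}ᶜ) + 2 ≤ SEC G := by
  classical
  set I : Set V := {v : V | ∀ u, ¬ G.Adj u v} with hIdef
  have hmemIc : ∀ x : V, x ∈ Iᶜ ↔ ∃ u, G.Adj u x := by
    intro x
    simp [hIdef, Set.mem_compl_iff]
  obtain ⟨a0, b0, hab⟩ : ∃ a b, G.Adj a b := by
    by_contra h; push_neg at h
    exact hne (by ext a b; simp [h a b])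
  have hbIc : b0 ∈ (Iᶜ : Set V) := (hmemIc b0).2 ⟨a0, hab⟩
  have hdegeq : ∀ w : (Iᶜ : Set V), deg (G.induce Iᶜ) w = deg G w.val := by
    intro w
    have himg : Subtype.val '' ((G.induce Iᶜ).neighborSet w) = G.neighborSet w.val := by
      ext x
      simp only [Set.mem_image, SimpleGraph.mem_neighborSet]
      constructor
      · rintro ⟨y, hy, rfl⟩; exact hy
      · intro hx
        exact ⟨⟨x, (hmemIc x).2 ⟨w.val, hx⟩⟩, hx, rfl⟩
    rw [deg, deg, ← himg, Set.ncard_image_of_injective _ Subtype.val_injective]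
  set δ := minDeg (G.induce Iᶜ) with hδdef
  obtain ⟨w₁, hw₁⟩ : ∃ w : (Iᶜ : Set V), deg G w.val = δ := by
    have hne' : (Set.range (deg (G.induce Iᶜ))).Nonempty :=
      ⟨_, Set.mem_range_self (⟨b0, hbIc⟩ : (Iᶜ : Set V))⟩
    obtain ⟨w, hw⟩ := Nat.sInf_mem hne'
    exact ⟨w, by rw [← hdegeq]; exact hw⟩
  have hδle : ∀ x : V, x ∈ (Iᶜ : Set V) → δ ≤ (G.neighborSet x).ncard := by
    intro x hx
    have h1 : δ ≤ deg (G.induce Iᶜ) ⟨x, hx⟩ :=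
      Nat.sInf_le (Set.mem_range_self _)
    rwa [hdegeq] at h1
  set v : V := w₁.val with hvdef
  set N : Finset V := (G.neighborSet v).toFinset with hNdef
  have hNmem : ∀ x, x ∈ N ↔ G.Adj v x := by
    intro x; rw [hNdef, Set.mem_toFinset]; rfl
  have hNcard : N.card = δ := by
    rw [hNdef, ← Set.ncard_eq_toFinset_card']; exact hw₁
  obtain ⟨w₀, hw₀⟩ := hI
  have hw₀iso : ∀ u, ¬ G.Adj u w₀ := hw₀
  have hvIc : v ∈ (Iᶜ : Set V) := w₁.2
  have hδpos : 1 ≤ δ := by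
    obtain ⟨u, hu⟩ := (hmemIc v).1 hvIc
    have huN : u ∈ N := (hNmem u).2 hu.symm
    have := Finset.card_pos.2 ⟨u, huN⟩
    omega
  have hNdeg : ∀ x ∈ N, δ ≤ (G.neighborSet x).ncard := fun x hx =>
    hδle x ((hmemIc x).2 ⟨v, (hNmem x).1 hx⟩)
  have hvN : v ∉ N := fun h => G.loopless.irrefl v ((hNmem v).1 h)
  have hw₀v : w₀ ≠ v := by
    intro e
    obtain ⟨u, hu⟩ := (hmemIc v).1 hvIc
    exact hw₀iso u (by rw [e]; exact hu)
  have hw₀N : w₀ ∉ N := fun h => hw₀iso v ((hNmem w₀).1 h)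
  have hcard1 : ∀ u ∈ N, (insert v (N.erase u)).card ≤ δ := by
    intro u hu
    have c1 := Finset.card_insert_le v (N.erase u)
    have c2 : (N.erase u).card = N.card - 1 := Finset.card_erase_of_mem hu
    omega
  have key : ∀ u ∈ N, ∀ a ∈ insert v (N.erase u),
      ∃ z, z ∉ insert v (N.erase u) ∧ G.Adj z a := by
    intro u hu a ha
    rcases Finset.mem_insert.mp ha with rfl | ha'
    · refine ⟨u, ?_, ((hNmem u).1 hu).symm⟩
      simp only [Finset.mem_insert, Finset.mem_erase, not_or]
      exact ⟨fun h => hvN (h ▸ hu), fun h => h.1 rfl⟩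
    · obtain ⟨z, hz, haz⟩ := aux_exists_nbr G (hNdeg a (Finset.mem_of_mem_erase ha'))
        (hcard1 u hu) (Finset.mem_insert_of_mem ha')
      exact ⟨z, hz, haz⟩
  have domN : IsDominating G (↑N : Set V)ᶜ := by
    apply aux_dom_compl
    intro u hu
    exact ⟨v, hvN, (hNmem u).1 hu⟩
  have domSi : ∀ u ∈ N, IsDominating G (↑(insert v (N.erase u)) : Set V)ᶜ :=
    fun u hu => aux_dom_compl G _ (key u hu)
  have sdS : IsSecureDominating G (↑N : Set V)ᶜ := by
    refine ⟨domN, ?_⟩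
    intro u hu
    rw [Set.notMem_compl_iff, Finset.mem_coe] at hu
    have huv : u ≠ v := fun e => hvN (e ▸ hu)
    refine ⟨v, by simpa using hvN, (hNmem u).1 hu, ?_⟩
    have hEq : (((↑N : Set V)ᶜ \ {v}) ∪ {u}) = (↑(insert v (N.erase u)) : Set V)ᶜ := by
      ext z
      simp only [Set.mem_union, Set.mem_diff, Set.mem_compl_iff, Finset.coe_insert,
        Set.mem_insert_iff, Finset.mem_coe, Set.mem_singleton_iff, Finset.mem_erase, not_or]
      constructor
      · rintro (⟨h1, h2⟩ | rfl)
        · exact ⟨h2, fun h => h1 h.2⟩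
        · exact ⟨huv, fun h => h.1 rfl⟩
      · rintro ⟨h1, h2⟩
        by_cases hzu : z = u
        · exact Or.inr hzu
        · exact Or.inl ⟨fun hzN => h2 ⟨hzu, hzN⟩, h1⟩
    rw [hEq]
    exact domSi u hu
  have sdSi : ∀ u ∈ N, IsSecureDominating G (↑(insert v (N.erase u)) : Set V)ᶜ := by
    intro u hu
    have huv : u ≠ v := fun e => hvN (e ▸ hu)
    refine ⟨domSi u hu, ?_⟩
    intro a ha
    rw [Set.notMem_compl_iff, Finset.mem_coe, Finset.mem_insert] at ha
    rcases ha with rfl | ha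
    · refine ⟨u, ?_, ((hNmem u).1 hu).symm, ?_⟩
      · simp only [Set.mem_compl_iff, Finset.coe_insert, Set.mem_insert_iff,
          Finset.mem_coe, Finset.mem_erase, not_or]
        exact ⟨huv, fun h => h.1 rfl⟩
      · have hEq : ((↑(insert v (N.erase u)) : Set V)ᶜ \ {u}) ∪ {v} = (↑N : Set V)ᶜ := by
          ext z
          simp only [Set.mem_union, Set.mem_diff, Set.mem_compl_iff, Finset.coe_insert,
            Set.mem_insert_iff, Finset.mem_coe, Set.mem_singleton_iff, Finset.mem_erase,
            not_or]
          constructor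
          · rintro (⟨⟨h1, h2⟩, h3⟩ | rfl)
            · intro hzN; exact h2 ⟨h3, hzN⟩
            · exact hvN
          · intro hzN
            by_cases hzv : z = v
            · exact Or.inr hzv
            · exact Or.inl ⟨⟨hzv, fun h => hzN h.2⟩, fun e => hzN (by rw [e]; exact hu)⟩
        rw [hEq]
        exact domN
    · have haN : a ∈ N := Finset.mem_of_mem_erase ha
      have hau : a ≠ u := (Finset.mem_erase.mp ha).1
      have hav : a ≠ v := fun e => hvN (e ▸ haN)
      obtain ⟨x, hx, hxa⟩ := aux_exists_nbr G (hNdeg a haN) (hcard1 u hu)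
        (Finset.mem_insert_of_mem ha)
      have hax : a ≠ x := fun e => hx (e ▸ Finset.mem_insert_of_mem ha)
      have hxv : x ≠ v := fun e => hx (by rw [e]; exact Finset.mem_insert_self v _)
      have hxer : x ∉ N.erase u := fun h => hx (Finset.mem_insert_of_mem h)
      refine ⟨x, by rw [Set.mem_compl_iff, Finset.mem_coe]; exact hx, hxa, ?_⟩
      set B' : Finset V := insert x (insert v ((N.erase u).erase a)) with hB'
      have haB' : a ∉ B' := by
        simp only [hB', Finset.mem_insert, Finset.mem_erase, not_or]
        exact ⟨hax, hav, fun h => h.1 rfl⟩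
      have hδ2 : 2 ≤ δ := by
        have hsub : ({a, u} : Finset V) ⊆ N := by
          intro z hz
          rcases Finset.mem_insert.mp hz with rfl | hz
          · exact haN
          · exact (Finset.mem_singleton.mp hz) ▸ hu
        have := Finset.card_le_card hsub
        rw [Finset.card_pair hau] at this
        omega
      have hB'card : B'.card ≤ δ := by
        have c1 : B'.card ≤ (insert v ((N.erase u).erase a)).card + 1 := by
          rw [hB']; exact Finset.card_insert_le _ _
        have c2 := Finset.card_insert_le v ((N.erase u).erase a)
        have c3 : ((N.erase u).erase a).card = (N.erase u).card - 1 :=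
          Finset.card_erase_of_mem ha
        have c4 : (N.erase u).card = N.card - 1 := Finset.card_erase_of_mem hu
        omega
      have domB' : IsDominating G (↑B' : Set V)ᶜ := by
        apply aux_dom_compl
        intro c hc
        rw [hB'] at hc
        rcases Finset.mem_insert.mp hc with rfl | hc'
        · exact ⟨a, haB', hxa.symm⟩
        · rcases Finset.mem_insert.mp hc' with rfl | hc''
          · exact ⟨a, haB', ((hNmem a).1 haN).symm⟩
          · have hcN : c ∈ N := Finset.mem_of_mem_erase (Finset.mem_of_mem_erase hc'')
            obtain ⟨z, hz, hzc⟩ := aux_exists_nbr G (hNdeg c hcN) hB'card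
              (by rw [hB']; exact Finset.mem_insert_of_mem (Finset.mem_insert_of_mem hc''))
            exact ⟨z, hz, hzc⟩
      have hEq : ((↑(insert v (N.erase u)) : Set V)ᶜ \ {x}) ∪ {a} = (↑B' : Set V)ᶜ := by
        ext z
        simp only [hB', Set.mem_union, Set.mem_diff, Set.mem_compl_iff, Finset.coe_insert,
          Set.mem_insert_iff, Finset.mem_coe, Set.mem_singleton_iff, Finset.mem_erase,
          not_or]
        constructor
        · rintro (⟨⟨h1, h2⟩, h3⟩ | rfl)
          · exact ⟨h3, h1, fun h => h2 ⟨h.2.1, h.2.2⟩⟩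
          · exact ⟨hax, hav, fun h => h.1 rfl⟩
        · rintro ⟨h1, h2, h3⟩
          by_cases hza : z = a
          · exact Or.inr hza
          · exact Or.inl ⟨⟨h2, fun h => h3 ⟨hza, h.1, h.2⟩⟩, h1⟩
      rw [hEq]
      exact domB'
  have notdom : ∀ A : Set V, w₀ ∉ A → ¬ IsDominating G A := by
    intro A hA hdom
    obtain ⟨z, _, hz⟩ := hdom w₀ hA
    exact hw₀iso z hz
  have notsd_v : ¬ IsSecureDominating G ({v} : Set V) :=
    fun h => notdom _ (by simpa using hw₀v) h.1
  have notsd_u : ∀ u ∈ N, ¬ IsSecureDominating G ({u} : Set V) :=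
    fun u hu h => notdom _ (by
      intro e
      rw [Set.mem_singleton_iff] at e
      exact hw₀N (by rw [e]; exact hu)) h.1
  set R : Set V := (↑(insert v N) : Set V)ᶜ with hRdef
  have hRmem : ∀ x, x ∈ R ↔ (x ≠ v ∧ x ∉ N) := by
    intro x
    simp only [hRdef, Set.mem_compl_iff, Finset.coe_insert, Set.mem_insert_iff,
      Finset.mem_coe, not_or]
  have hw₀R : w₀ ∈ R := (hRmem w₀).2 ⟨hw₀v, hw₀N⟩
  have hvR : v ∉ R := fun h => ((hRmem v).1 h).1 rfl
  have huR : ∀ u ∈ N, u ∉ R := fun u hu h => ((hRmem u).1 h).2 hu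
  have notsd_R : ¬ IsSecureDominating G R := by
    rintro ⟨hdom, -⟩
    obtain ⟨z, hzR, hzv⟩ := hdom v hvR
    exact ((hRmem z).1 hzR).2 ((hNmem z).2 hzv.symm)
  have hUnionv : ({v} : Set V) ∪ R = (↑N : Set V)ᶜ := by
    ext z
    simp only [Set.mem_union, Set.mem_singleton_iff, Set.mem_compl_iff, Finset.mem_coe,
      hRmem]
    constructor
    · rintro (rfl | ⟨h1, h2⟩)
      · exact hvN
      · exact h2
    · intro h
      by_cases hzv : z = v
      · exact Or.inl hzv
      · exact Or.inr ⟨hzv, h⟩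
  have hUnionu : ∀ u ∈ N, ({u} : Set V) ∪ R = (↑(insert v (N.erase u)) : Set V)ᶜ := by
    intro u hu
    have huv : u ≠ v := fun e => hvN (e ▸ hu)
    ext z
    simp only [Set.mem_union, Set.mem_singleton_iff, Set.mem_compl_iff, Finset.coe_insert,
      Set.mem_insert_iff, Finset.mem_coe, Finset.mem_erase, not_or, hRmem]
    constructor
    · rintro (rfl | ⟨h1, h2⟩)
      · exact ⟨huv, fun h => h.1 rfl⟩
      · exact ⟨h1, fun h => h2 h.2⟩
    · rintro ⟨h1, h2⟩
      by_cases hzu : z = u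
      · exact Or.inl hzu
      · exact Or.inr ⟨h1, fun hzN => h2 ⟨hzu, hzN⟩⟩
  set π : Finset (Set V) := insert R (insert {v} (N.image fun u => ({u} : Set V)))
    with hπdef
  have hmemπ : ∀ A, A ∈ π ↔ A = R ∨ A = {v} ∨ ∃ u ∈ N, A = {u} := by
    intro A
    simp only [hπdef, Finset.mem_insert, Finset.mem_image]
    constructor
    · rintro (rfl | rfl | ⟨u, hu, rfl⟩)
      · exact Or.inl rfl
      · exact Or.inr (Or.inl rfl)
      · exact Or.inr (Or.inr ⟨u, hu, rfl⟩)
    · rintro (rfl | rfl | ⟨u, hu, rfl⟩)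
      · exact Or.inl rfl
      · exact Or.inr (Or.inl rfl)
      · exact Or.inr (Or.inr ⟨u, hu, rfl⟩)
  have hRnev : R ≠ ({v} : Set V) := by
    intro e
    rw [e] at hw₀R
    exact hw₀v hw₀R
  have hRneu : ∀ u ∈ N, R ≠ ({u} : Set V) := by
    intro u hu e
    rw [e] at hw₀R
    exact hw₀N (hw₀R ▸ hu)
  have hvnotim : ({v} : Set V) ∉ N.image (fun u => ({u} : Set V)) := by
    intro hmem
    rw [Finset.mem_image] at hmem
    obtain ⟨u, hu, he⟩ := hmem
    exact hvN ((Set.singleton_injective he) ▸ hu)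
  have hRnotim : R ∉ insert ({v} : Set V) (N.image (fun u => ({u} : Set V))) := by
    intro hmem
    rw [Finset.mem_insert, Finset.mem_image] at hmem
    rcases hmem with he | ⟨u, hu, he⟩
    · exact hRnev he
    · exact hRneu u hu he.symm
  have hπcard : π.card = δ + 2 := by
    rw [hπdef, Finset.card_insert_of_notMem hRnotim, Finset.card_insert_of_notMem hvnotim,
      Finset.card_image_of_injective _ Set.singleton_injective, hNcard]
  have hpart : Setoid.IsPartition (↑π : Set (Set V)) := by
    constructor
    · intro h
      rw [Finset.mem_coe, hmemπ] at h
      rcases h with h | h | ⟨u, hu, h⟩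
      · exact (h ▸ hw₀R : w₀ ∈ (∅ : Set V))
      · exact (h ▸ rfl : v ∈ (∅ : Set V))
      · exact (h ▸ rfl : u ∈ (∅ : Set V))
    · intro a
      by_cases hav : a = v
      · refine ⟨{v}, ⟨by rw [Finset.mem_coe, hmemπ]; exact Or.inr (Or.inl rfl),
          by rw [hav]; exact rfl⟩, ?_⟩
        rintro y ⟨hy, hay⟩
        rw [Finset.mem_coe, hmemπ] at hy
        rcases hy with rfl | rfl | ⟨u, hu, rfl⟩
        · exact absurd (hav ▸ hay) hvR
        · rfl
        · rw [Set.mem_singleton_iff] at hay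
          exact absurd ((hay.symm.trans hav) ▸ hu) hvN
      · by_cases haN : a ∈ N
        · refine ⟨{a}, ⟨by rw [Finset.mem_coe, hmemπ]; exact Or.inr (Or.inr ⟨a, haN, rfl⟩),
            rfl⟩, ?_⟩
          rintro y ⟨hy, hay⟩
          rw [Finset.mem_coe, hmemπ] at hy
          rcases hy with rfl | rfl | ⟨u, hu, rfl⟩
          · exact absurd haN (((hRmem a).1 hay).2)
          · exact absurd hay hav
          · rw [Set.mem_singleton_iff] at hay
            rw [hay]
        · refine ⟨R, ⟨by rw [Finset.mem_coe, hmemπ]; exact Or.inl rfl,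
            (hRmem a).2 ⟨hav, haN⟩⟩, ?_⟩
          rintro y ⟨hy, hay⟩
          rw [Finset.mem_coe, hmemπ] at hy
          rcases hy with rfl | rfl | ⟨u, hu, rfl⟩
          · rfl
          · exact absurd hay hav
          · rw [Set.mem_singleton_iff] at hay
            exact absurd (hay ▸ hu) haN
  have hsec : IsSecPartition G π := by
    refine ⟨hpart, ?_⟩
    intro A hA
    rw [hmemπ] at hA
    rcases hA with rfl | rfl | ⟨u, hu, rfl⟩
    · right
      refine ⟨notsd_R, {v}, by rw [hmemπ]; exact Or.inr (Or.inl rfl), fun e => hRnev e.symm,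
        ?_⟩
      rw [Set.union_comm, hUnionv]
      exact sdS
    · right
      refine ⟨notsd_v, R, by rw [hmemπ]; exact Or.inl rfl, hRnev, ?_⟩
      rw [hUnionv]
      exact sdS
    · right
      refine ⟨notsd_u u hu, R, by rw [hmemπ]; exact Or.inl rfl, hRneu u hu, ?_⟩
      rw [hUnionu u hu]
      exact sdSi u hu
  have hbdd : BddAbove {k | ∃ π : Finset (Set V), IsSecPartition G π ∧ π.card = k} := by
    refine ⟨Fintype.card (Set V), ?_⟩
    rintro k ⟨π', -, rfl⟩
    exact Finset.card_le_univ π'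
  have hmem : δ + 2 ∈ {k | ∃ π : Finset (Set V), IsSecPartition G π ∧ π.card = k} :=
    ⟨π, hsec, hπcard⟩
  exact le_csSup hbdd hmem
end
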